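/- Let ε > 0 and let Γ₁, Γ₂ be metric spaces in which distinct points are at distance at least ε, and let f : Γ₁ → Γ₂ be a (K,K)-quasi-isometry. Then the map F : H(Γ₁) → H(Γ₂) defined on vertices by F(x,n) = (f(x),n) extends to a (K',K')-quasi-isometry of the combinatorial horoballs, where K' depends only on K and ε. -/

import Mathlib

open scoped ENNReal Classical

/-- The total length of a chain (finite path) of vertices, where consecutive
vertices are charged according to the edge-weight function `w`. -/
noncomputable def chainCost {V : Type*} (w : V → V → ℝ≥0∞) : List V → ℝ≥0∞
  | [] => 0
  | [_] => 0
  | u :: v :: l => w u v + chainCost w (v :: l)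

/-- The path metric of the weighted graph with edge-weight function `w`. -/
noncomputable def pathDist {V : Type*} (w : V → V → ℝ≥0∞) (u v : V) : ℝ≥0∞ :=
  ⨅ (l : List V) (_ : l.head? = some u) (_ : l.getLast? = some v), chainCost w l

/-- The edge weights of the combinatorial horoball over a metric space `Γ`. -/
noncomputable def horoballWeight (Γ : Type*) [MetricSpace Γ] :
    Γ × ℕ → Γ × ℕ → ℝ≥0∞ := fun p q =>
  if p.1 = q.1 ∧ (q.2 = p.2 + 1 ∨ p.2 = q.2 + 1) then 1
  else if p.2 = q.2 ∧ p.1 ≠ q.1 then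
    ENNReal.ofReal (Real.exp (-(p.2 : ℝ)) * dist p.1 q.1)
  else ⊤

lemma pathDist_le_chainCost {V : Type*} (w : V → V → ℝ≥0∞) {u v : V} {l : List V}
    (hu : l.head? = some u) (hv : l.getLast? = some v) :
    pathDist w u v ≤ chainCost w l :=
  iInf_le_of_le l (iInf_le_of_le hu (iInf_le _ hv))

lemma pathDist_self_le {V : Type*} (w : V → V → ℝ≥0∞) (u : V) : pathDist w u u ≤ 0 := by
  simpa [chainCost] using pathDist_le_chainCost w (l := [u]) rfl rfl

lemma pathDist_le_weight {V : Type*} (w : V → V → ℝ≥0∞) (u v : V) :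
    pathDist w u v ≤ w u v := by
  simpa [chainCost] using pathDist_le_chainCost w (l := [u, v]) rfl rfl

lemma chainCost_append {V : Type*} (w : V → V → ℝ≥0∞) (l : List V) (a : V) (t : List V) :
    chainCost w (l ++ a :: t) ≤ chainCost w (l ++ [a]) + chainCost w (a :: t) := by
  induction l with
  | nil => simp [chainCost]
  | cons b l ih =>
    cases l with
    | nil => simp [chainCost]
    | cons c l' =>
      simp only [List.cons_append, chainCost]
      calc w b c + chainCost w (c :: (l' ++ a :: t))
          ≤ w b c + (chainCost w (c :: l' ++ [a]) + chainCost w (a :: t)) := by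
            gcongr
            simpa using ih
        _ = w b c + chainCost w (c :: l' ++ [a]) + chainCost w (a :: t) := by
            rw [add_assoc]

lemma chainCost_glue {V : Type*} (w : V → V → ℝ≥0∞) {z : V} :
    ∀ l₁ : List V, l₁.getLast? = some z → ∀ t : List V,
      chainCost w (l₁ ++ t) ≤ chainCost w l₁ + chainCost w (z :: t) := by
  intro l₁
  induction l₁ with
  | nil => simp
  | cons b l ih =>
    cases l with
    | nil =>
      intro hb t
      simp only [List.getLast?_singleton, Option.some.injEq] at hb
      subst hb
      simp [chainCost]
    | cons c l' =>
      intro hz t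
      rw [List.getLast?_cons_cons] at hz
      simp only [List.cons_append, chainCost, add_assoc]
      gcongr
      exact ih hz t

lemma pathDist_triangle {V : Type*} (w : V → V → ℝ≥0∞) (u z v : V) :
    pathDist w u v ≤ pathDist w u z + pathDist w z v := by
  conv_rhs => rw [pathDist, pathDist]
  simp only [ENNReal.iInf_add, ENNReal.add_iInf]
  refine le_iInf fun l₁ => le_iInf fun h1 => le_iInf fun h1' => le_iInf fun l₂ =>
    le_iInf fun h2 => le_iInf fun h2' => ?_
  -- here l₁ is a chain from z to v, l₂ a chain from u to z
  cases l₁ with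
  | nil => simp at h1
  | cons a t =>
    simp only [List.head?_cons, Option.some.injEq] at h1
    subst h1
    cases t with
    | nil =>
      simp only [List.getLast?_singleton, Option.some.injEq] at h1'
      subst h1'
      simpa [chainCost] using pathDist_le_chainCost w (l := l₂) h2 h2'
    | cons b t' =>
      refine le_trans (pathDist_le_chainCost w (l := l₂ ++ (b :: t')) ?_ ?_)
        (chainCost_glue w l₂ h2' (b :: t'))
      · cases l₂ with
        | nil => simp at h2
        | cons x l => simpa using h2
      · rw [List.getLast?_append, List.getLast?_cons_cons] at *
        simp [h1']

lemma pathDist_transfer {V V' : Type*} (w : V → V → ℝ≥0∞) (w' : V' → V' → ℝ≥0∞)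
    (g : V → V') (C : ℝ≥0∞) (hC0 : C ≠ 0) (hCt : C ≠ ⊤)
    (h : ∀ u v : V, g u ≠ g v → w' (g u) (g v) ≤ C * w u v) (u v : V) :
    pathDist w' (g u) (g v) ≤ C * pathDist w u v := by
  have key : ∀ l : List V, ∀ u v : V, l.head? = some u → l.getLast? = some v →
      pathDist w' (g u) (g v) ≤ C * chainCost w l := by
    intro l
    induction l with
    | nil => intro u v hu hv; simp at hu
    | cons a t ih =>
      intro u v hu hv
      simp only [List.head?_cons, Option.some.injEq] at hu
      subst hu
      cases t with
      | nil =>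
        simp only [List.getLast?_singleton, Option.some.injEq] at hv
        subst hv
        simpa [chainCost] using pathDist_self_le w' (g a)
      | cons b t' =>
        rw [List.getLast?_cons_cons] at hv
        have step : pathDist w' (g a) (g b) ≤ C * w a b := by
          by_cases hgb : g a = g b
          · rw [hgb]
            exact le_trans (pathDist_self_le w' (g b)) zero_le
          · exact le_trans (pathDist_le_weight w' _ _) (h a b hgb)
        calc pathDist w' (g a) (g v)
            ≤ pathDist w' (g a) (g b) + pathDist w' (g b) (g v) :=
              pathDist_triangle w' _ _ _
          _ ≤ C * w a b + C * chainCost w (b :: t') := add_le_add step (ih b v rfl hv)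
          _ = C * chainCost w (a :: b :: t') := by rw [chainCost, mul_add]
  conv_rhs => rw [pathDist]
  simp only [ENNReal.mul_iInf_of_ne hC0 hCt]
  exact le_iInf fun l => le_iInf fun hu => le_iInf fun hv => key l u v hu hv

lemma horoballWeight_vert {Γ : Type*} [MetricSpace Γ] (x : Γ) (j : ℕ) :
    horoballWeight Γ (x, j) (x, j + 1) = 1 ∧ horoballWeight Γ (x, j + 1) (x, j) = 1 := by
  constructor <;> simp [horoballWeight]

lemma horoballWeight_horiz {Γ : Type*} [MetricSpace Γ] {x y : Γ} (n : ℕ) (hxy : x ≠ y) :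
    horoballWeight Γ (x, n) (y, n) = ENNReal.ofReal (Real.exp (-(n : ℝ)) * dist x y) := by
  simp [horoballWeight, hxy]

lemma horoball_vert_le {Γ : Type*} [MetricSpace Γ] (x : Γ) (n k : ℕ) :
    pathDist (horoballWeight Γ) (x, n) (x, n + k) ≤ (k : ℝ≥0∞) ∧
      pathDist (horoballWeight Γ) (x, n + k) (x, n) ≤ (k : ℝ≥0∞) := by
  induction k with
  | zero => simpa using pathDist_self_le (horoballWeight Γ) (x, n)
  | succ k ih =>
    constructor
    · calc pathDist (horoballWeight Γ) (x, n) (x, n + (k + 1))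
          ≤ pathDist (horoballWeight Γ) (x, n) (x, n + k) +
              pathDist (horoballWeight Γ) (x, n + k) (x, n + k + 1) := by
            have := pathDist_triangle (horoballWeight Γ) (x, n) (x, n + k) (x, n + (k + 1))
            simpa [← add_assoc] using this
        _ ≤ (k : ℝ≥0∞) + 1 := by
            refine add_le_add ih.1 ?_
            refine le_trans (pathDist_le_weight _ _ _) ?_
            rw [(horoballWeight_vert x (n + k)).1]
        _ = ((k + 1 : ℕ) : ℝ≥0∞) := by push_cast; ring
    · calc pathDist (horoballWeight Γ) (x, n + (k + 1)) (x, n)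
          ≤ pathDist (horoballWeight Γ) (x, n + k + 1) (x, n + k) +
              pathDist (horoballWeight Γ) (x, n + k) (x, n) := by
            have := pathDist_triangle (horoballWeight Γ) (x, n + (k + 1)) (x, n + k) (x, n)
            simpa [← add_assoc] using this
        _ ≤ 1 + (k : ℝ≥0∞) := by
            refine add_le_add ?_ ih.2
            refine le_trans (pathDist_le_weight _ _ _) ?_
            rw [(horoballWeight_vert x (n + k)).2]
        _ = ((k + 1 : ℕ) : ℝ≥0∞) := by push_cast; ring

lemma horoball_horiz_le {Γ : Type*} [MetricSpace Γ] (x y : Γ) (n : ℕ) :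
    pathDist (horoballWeight Γ) (x, n) (y, n) ≤ ENNReal.ofReal (dist x y) := by
  by_cases hxy : x = y
  · subst hxy
    exact le_trans (pathDist_self_le _ _) zero_le
  · refine le_trans (pathDist_le_weight _ _ _) ?_
    rw [horoballWeight_horiz n hxy]
    refine ENNReal.ofReal_le_ofReal ?_
    have h1 : Real.exp (-(n : ℝ)) ≤ 1 := by
      rw [Real.exp_le_one_iff]; simp
    nlinarith [dist_nonneg (x := x) (y := y), Real.exp_pos (-(n : ℝ))]

lemma horoball_ne_top {Γ : Type*} [MetricSpace Γ] (x y : Γ) (n m : ℕ) :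
    pathDist (horoballWeight Γ) (x, n) (y, m) ≠ ⊤ := by
  have hvert : pathDist (horoballWeight Γ) (y, n) (y, m) ≠ ⊤ := by
    rcases le_total n m with h | h
    · obtain ⟨k, rfl⟩ := Nat.exists_eq_add_of_le h
      exact ne_top_of_le_ne_top (by simp) (horoball_vert_le y n k).1
    · obtain ⟨k, rfl⟩ := Nat.exists_eq_add_of_le h
      exact ne_top_of_le_ne_top (by simp) (horoball_vert_le y m k).2
  refine ne_top_of_le_ne_top ?_ (pathDist_triangle (horoballWeight Γ) (x, n) (y, n) (y, m))
  exact ENNReal.add_ne_top.2 ⟨ne_top_of_le_ne_top ENNReal.ofReal_ne_top (horoball_horiz_le x y n), hvert⟩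

lemma horoballWeight_cases {Γ : Type*} [MetricSpace Γ] (x y : Γ) (n m : ℕ) :
    horoballWeight Γ (x, n) (y, m) =
      if x = y ∧ (m = n + 1 ∨ n = m + 1) then 1
      else if n = m ∧ x ≠ y then ENNReal.ofReal (Real.exp (-(n : ℝ)) * dist x y)
      else ⊤ := rfl


/-- a `(K,K)`-quasi-isometry `f : Γ₁ → Γ₂` of `ε`-separated spaces
induces, via `F(x,n) = (f(x),n)`, a `(K',K')`-quasi-isometry of the
combinatorial horoballs, with `K'` depending only on `K` and `ε`. -/
theorem horoball_quasiisometry :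
    ∀ K ε : ℝ, 1 ≤ K → 0 < ε → ∃ K' : ℝ, 1 ≤ K' ∧
      ∀ (Γ₁ Γ₂ : Type) [inst₁ : MetricSpace Γ₁] [inst₂ : MetricSpace Γ₂],
        (∀ x y : Γ₁, x ≠ y → ε ≤ dist x y) →
        (∀ x y : Γ₂, x ≠ y → ε ≤ dist x y) →
        ∀ f : Γ₁ → Γ₂,
          (∀ x y : Γ₁, (1 / K) * dist x y - K ≤ dist (f x) (f y) ∧
            dist (f x) (f y) ≤ K * dist x y + K) →
          (∀ z : Γ₂, ∃ x : Γ₁, dist z (f x) ≤ K) →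
          (∀ p q : Γ₁ × ℕ,
            (1 / K') * (pathDist (horoballWeight Γ₁) p q).toReal - K' ≤
                (pathDist (horoballWeight Γ₂) (f p.1, p.2) (f q.1, q.2)).toReal ∧
              (pathDist (horoballWeight Γ₂) (f p.1, p.2) (f q.1, q.2)).toReal ≤
                K' * (pathDist (horoballWeight Γ₁) p q).toReal + K') ∧
          (∀ q : Γ₂ × ℕ, ∃ p : Γ₁ × ℕ,
            (pathDist (horoballWeight Γ₂) q (f p.1, p.2)).toReal ≤ K') := by
  intro K ε hK hε
  have hK0 : (0 : ℝ) < K := lt_of_lt_of_le one_pos hK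
  set C1 : ℝ := K * (1 + 1 / ε) with hC1def
  set C2 : ℝ := K + 3 * K ^ 2 / ε with hC2def
  have hC1pos : 0 < C1 := by positivity
  have hC2pos : 0 < C2 := by positivity
  have hC1one : 1 ≤ C1 := by
    have h1 : 0 < 1 / ε := by positivity
    nlinarith
  have hC2one : 1 ≤ C2 := by
    rw [hC2def]
    have h1 : 0 ≤ 3 * K ^ 2 / ε := by positivity
    linarith
  refine ⟨C1 + C2 + 4 * K ^ 2, by nlinarith, ?_⟩
  intro Γ₁ Γ₂ inst₁ inst₂ sep₁ sep₂ f hf hsurj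
  set K' : ℝ := C1 + C2 + 4 * K ^ 2 with hK'def
  have hK'1 : 1 ≤ K' := by nlinarith
  have hK'C1 : C1 ≤ K' := by nlinarith
  have hK'C2 : C2 ≤ K' := by nlinarith
  have hK'4K : 4 * K ^ 2 ≤ K' := by nlinarith
  have hK'pos : 0 < K' := lt_of_lt_of_le one_pos hK'1
  -- quasi-inverse
  have hgex : ∀ z : Γ₂, ∃ x : Γ₁, dist z (f x) ≤ K := hsurj
  set g : Γ₂ → Γ₁ := fun z => Classical.choose (hgex z) with hgdef
  have hg : ∀ z : Γ₂, dist z (f (g z)) ≤ K := fun z => Classical.choose_spec (hgex z)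
  -- transfer hypothesis for F
  have h₁ : ∀ u v : Γ₁ × ℕ,
      (fun p : Γ₁ × ℕ => (f p.1, p.2)) u ≠ (fun p : Γ₁ × ℕ => (f p.1, p.2)) v →
      horoballWeight Γ₂ ((fun p : Γ₁ × ℕ => (f p.1, p.2)) u)
          ((fun p : Γ₁ × ℕ => (f p.1, p.2)) v) ≤
        ENNReal.ofReal C1 * horoballWeight Γ₁ u v := by
    rintro ⟨x, n⟩ ⟨y, m⟩ hne
    simp only at hne ⊢
    rw [horoballWeight_cases, horoballWeight_cases]
    by_cases hv : x = y ∧ (m = n + 1 ∨ n = m + 1)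
    · rw [if_pos hv, if_pos ⟨congrArg f hv.1, hv.2⟩, mul_one]
      exact ENNReal.one_le_ofReal.2 hC1one
    · by_cases hh : n = m ∧ x ≠ y
      · obtain ⟨rfl, hxy⟩ := hh
        have hfxy : f x ≠ f y := by
          intro h
          exact hne (by rw [h])
        rw [if_neg (by rintro ⟨h, -⟩; exact hfxy h), if_pos ⟨rfl, hfxy⟩,
          if_neg hv, if_pos ⟨rfl, hxy⟩]
        rw [← ENNReal.ofReal_mul hC1pos.le]
        refine ENNReal.ofReal_le_ofReal ?_
        have hd : dist (f x) (f y) ≤ K * dist x y + K := (hf x y).2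
        have hsep : ε ≤ dist x y := sep₁ x y hxy
        have hKd : K ≤ K / ε * dist x y := by
          rw [div_mul_eq_mul_div, le_div_iff₀ hε]
          nlinarith
        have hmain : dist (f x) (f y) ≤ C1 * dist x y := by
          have hexp : C1 * dist x y = K * dist x y + K / ε * dist x y := by
            rw [hC1def]; ring
          linarith
        calc Real.exp (-(n : ℝ)) * dist (f x) (f y)
            ≤ Real.exp (-(n : ℝ)) * (C1 * dist x y) :=
              mul_le_mul_of_nonneg_left hmain (Real.exp_pos _).le
          _ = C1 * (Real.exp (-(n : ℝ)) * dist x y) := by ring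
      · rw [if_neg hv, if_neg hh, ENNReal.mul_top (by simp [ENNReal.ofReal_eq_zero]; linarith)]
        exact le_top
  -- transfer hypothesis for G
  have h₂ : ∀ u v : Γ₂ × ℕ,
      (fun q : Γ₂ × ℕ => (g q.1, q.2)) u ≠ (fun q : Γ₂ × ℕ => (g q.1, q.2)) v →
      horoballWeight Γ₁ ((fun q : Γ₂ × ℕ => (g q.1, q.2)) u)
          ((fun q : Γ₂ × ℕ => (g q.1, q.2)) v) ≤
        ENNReal.ofReal C2 * horoballWeight Γ₂ u v := by
    rintro ⟨z, n⟩ ⟨w, m⟩ hne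
    simp only at hne ⊢
    rw [horoballWeight_cases, horoballWeight_cases]
    by_cases hv : z = w ∧ (m = n + 1 ∨ n = m + 1)
    · rw [if_pos hv, if_pos ⟨congrArg g hv.1, hv.2⟩, mul_one]
      exact ENNReal.one_le_ofReal.2 hC2one
    · by_cases hh : n = m ∧ z ≠ w
      · obtain ⟨rfl, hzw⟩ := hh
        have hgzw : g z ≠ g w := by
          intro h
          exact hne (by rw [h])
        rw [if_neg (by rintro ⟨h, -⟩; exact hgzw h), if_pos ⟨rfl, hgzw⟩,
          if_neg hv, if_pos ⟨rfl, hzw⟩]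
        rw [← ENNReal.ofReal_mul hC2pos.le]
        refine ENNReal.ofReal_le_ofReal ?_
        have hlo := (hf (g z) (g w)).1
        have htri : dist (f (g z)) (f (g w)) ≤ dist z w + 2 * K := by
          have h1 := hg z
          have h2 := hg w
          have h3 := dist_triangle4 (f (g z)) z w (f (g w))
          have h4 : dist (f (g z)) z = dist z (f (g z)) := dist_comm _ _
          have h5 : dist w (f (g w)) ≤ K := h2
          linarith
        have hd : dist (g z) (g w) ≤ K * dist z w + 3 * K ^ 2 := by
          have h6 : (1 / K) * dist (g z) (g w) - K ≤ dist z w + 2 * K := le_trans hlo htri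
          have h7 : (1 / K) * dist (g z) (g w) ≤ dist z w + 3 * K := by linarith
          calc dist (g z) (g w) = K * ((1 / K) * dist (g z) (g w)) := by
                rw [← mul_assoc, mul_one_div, div_self hK0.ne', one_mul]
            _ ≤ K * (dist z w + 3 * K) := mul_le_mul_of_nonneg_left h7 hK0.le
            _ = K * dist z w + 3 * K ^ 2 := by ring
        have hsep : ε ≤ dist z w := sep₂ z w hzw
        have hKd : 3 * K ^ 2 ≤ 3 * K ^ 2 / ε * dist z w := by
          rw [div_mul_eq_mul_div, le_div_iff₀ hε]
          nlinarith
        have hmain : dist (g z) (g w) ≤ C2 * dist z w := by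
          rw [hC2def, add_mul]
          linarith
        calc Real.exp (-(n : ℝ)) * dist (g z) (g w)
            ≤ Real.exp (-(n : ℝ)) * (C2 * dist z w) :=
              mul_le_mul_of_nonneg_left hmain (Real.exp_pos _).le
          _ = C2 * (Real.exp (-(n : ℝ)) * dist z w) := by ring
      · rw [if_neg hv, if_neg hh, ENNReal.mul_top (by simp [ENNReal.ofReal_eq_zero]; linarith)]
        exact le_top
  have hC1ne0 : ENNReal.ofReal C1 ≠ 0 := by simp [ENNReal.ofReal_eq_zero]; linarith
  have hC2ne0 : ENNReal.ofReal C2 ≠ 0 := by simp [ENNReal.ofReal_eq_zero]; linarith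
  -- displacement bound for g ∘ f
  have hdisp : ∀ x : Γ₁, dist x (g (f x)) ≤ 2 * K ^ 2 := by
    intro x
    have hlo := (hf x (g (f x))).1
    have h1 : dist (f x) (f (g (f x))) ≤ K := hg (f x)
    have h7 : (1 / K) * dist x (g (f x)) ≤ 2 * K := by linarith
    calc dist x (g (f x)) = K * ((1 / K) * dist x (g (f x))) := by
          rw [← mul_assoc, mul_one_div, div_self hK0.ne', one_mul]
      _ ≤ K * (2 * K) := mul_le_mul_of_nonneg_left h7 hK0.le
      _ = 2 * K ^ 2 := by ring
  constructor
  · rintro ⟨x, n⟩ ⟨y, m⟩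
    simp only
    set D₁ : ℝ≥0∞ := pathDist (horoballWeight Γ₁) (x, n) (y, m) with hD₁def
    set D₂ : ℝ≥0∞ := pathDist (horoballWeight Γ₂) (f x, n) (f y, m) with hD₂def
    have hD1top : D₁ ≠ ⊤ := horoball_ne_top x y n m
    have hD2top : D₂ ≠ ⊤ := horoball_ne_top (f x) (f y) n m
    set t₁ : ℝ := D₁.toReal with ht₁def
    set t₂ : ℝ := D₂.toReal with ht₂def
    have ht₁0 : 0 ≤ t₁ := ENNReal.toReal_nonneg
    have ht₂0 : 0 ≤ t₂ := ENNReal.toReal_nonneg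
    have hD₁ : D₁ = ENNReal.ofReal t₁ := (ENNReal.ofReal_toReal hD1top).symm
    have hD₂ : D₂ = ENNReal.ofReal t₂ := (ENNReal.ofReal_toReal hD2top).symm
    -- upper bound : t₂ ≤ C1 * t₁
    have hA : D₂ ≤ ENNReal.ofReal C1 * D₁ :=
      pathDist_transfer (horoballWeight Γ₁) (horoballWeight Γ₂)
        (fun p : Γ₁ × ℕ => (f p.1, p.2)) (ENNReal.ofReal C1) hC1ne0
        ENNReal.ofReal_ne_top h₁ (x, n) (y, m)
    have hup : t₂ ≤ C1 * t₁ := by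
      refine ENNReal.toReal_le_of_le_ofReal (by positivity) ?_
      calc D₂ ≤ ENNReal.ofReal C1 * D₁ := hA
        _ = ENNReal.ofReal (C1 * t₁) := by
            rw [hD₁, ← ENNReal.ofReal_mul hC1pos.le]
    -- lower bound : t₁ ≤ C2 * t₂ + 4 K²
    have hB : pathDist (horoballWeight Γ₁) (g (f x), n) (g (f y), m) ≤
        ENNReal.ofReal C2 * D₂ :=
      pathDist_transfer (horoballWeight Γ₂) (horoballWeight Γ₁)
        (fun q : Γ₂ × ℕ => (g q.1, q.2)) (ENNReal.ofReal C2) hC2ne0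
        ENNReal.ofReal_ne_top h₂ (f x, n) (f y, m)
    have hleg1 : pathDist (horoballWeight Γ₁) (x, n) (g (f x), n) ≤
        ENNReal.ofReal (2 * K ^ 2) :=
      le_trans (horoball_horiz_le x (g (f x)) n) (ENNReal.ofReal_le_ofReal (hdisp x))
    have hleg2 : pathDist (horoballWeight Γ₁) (g (f y), m) (y, m) ≤
        ENNReal.ofReal (2 * K ^ 2) := by
      refine le_trans (horoball_horiz_le (g (f y)) y m) (ENNReal.ofReal_le_ofReal ?_)
      rw [dist_comm]
      exact hdisp y
    have hDall : D₁ ≤ ENNReal.ofReal (2 * K ^ 2 + (C2 * t₂ + 2 * K ^ 2)) := by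
      calc D₁ ≤ pathDist (horoballWeight Γ₁) (x, n) (g (f x), n) +
            (pathDist (horoballWeight Γ₁) (g (f x), n) (g (f y), m) +
              pathDist (horoballWeight Γ₁) (g (f y), m) (y, m)) := by
            refine le_trans (pathDist_triangle _ (x, n) (g (f x), n) (y, m)) ?_
            gcongr
            exact pathDist_triangle _ _ (g (f y), m) _
        _ ≤ ENNReal.ofReal (2 * K ^ 2) +
            (ENNReal.ofReal C2 * D₂ + ENNReal.ofReal (2 * K ^ 2)) :=
            add_le_add hleg1 (add_le_add hB hleg2)
        _ = ENNReal.ofReal (2 * K ^ 2 + (C2 * t₂ + 2 * K ^ 2)) := by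
            rw [hD₂, ← ENNReal.ofReal_mul hC2pos.le, ← ENNReal.ofReal_add (by positivity)
              (by positivity), ← ENNReal.ofReal_add (by positivity) (by positivity)]
    have hlow : t₁ ≤ C2 * t₂ + 4 * K ^ 2 := by
      have h := ENNReal.toReal_le_of_le_ofReal (by positivity) hDall
      linarith [h]
    constructor
    · rw [sub_le_iff_le_add, div_mul_eq_mul_div, one_mul, div_le_iff₀ hK'pos]
      nlinarith [hlow, mul_le_mul_of_nonneg_right hK'C2 ht₂0, hK'4K, hK'1, hK'pos]
    · nlinarith [hup, mul_le_mul_of_nonneg_right hK'C1 ht₁0, hK'pos, ht₁0]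
  · rintro ⟨z, k⟩
    refine ⟨(g z, k), ?_⟩
    simp only
    refine ENNReal.toReal_le_of_le_ofReal (by positivity) ?_
    refine le_trans (horoball_horiz_le z (f (g z)) k) (ENNReal.ofReal_le_ofReal ?_)
    calc dist z (f (g z)) ≤ K := hg z
      _ ≤ K' := by nlinarith
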